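/- For every function f : 𝔹^n → 𝔹^n, the chaotic-iterations dynamical system G̃_f is chaotic according to Devaney on (X̃, d) (i.e., its periodic points are dense in X̃ and it is topologically transitive) if and only if the graph of iterations Γ(f) is strongly connected. -/

import Mathlib

open scoped BigOperators

namespace CI

/-- A Boolean state of a system of `n` cells. -/
abbrev BVec (n : ℕ) := Fin n → Bool

open Classical in
/-- `δ(a,b) = 0` if `a = b`, `1` otherwise. -/
noncomputable def delta {α : Type*} (a b : α) : ℝ := if a = b then 0 else 1

/-- `F_f(k,E)` updates the `k`-th coordinate of `E` to `f(E)_k`. -/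
def Ff (n : ℕ) (f : BVec n → BVec n) (k : Fin n) (E : BVec n) : BVec n :=
  fun j => if j = k then f E k else E j

/-- Arc of the graph of iterations `Γ(f)`: from `x` to the vector obtained by
negating the `i`-th coordinate of `x`, whenever `F_f(i,x)` equals that vector. -/
def arc (n : ℕ) (f : BVec n → BVec n) (x y : BVec n) : Prop :=
  ∃ i : Fin n, y = Function.update x i (!x i) ∧ Ff n f i x = y

/-- `Γ(f)` is strongly connected: every vertex is reachable from every vertex. -/
def stronglyConnected (n : ℕ) (f : BVec n → BVec n) : Prop :=
  ∀ x y : BVec n, Relation.ReflTransGen (arc n f) x y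

/-- The chaotic-iterations dynamics `G̃_f(S,E) = (σ(S), F_f(S^0,E))` on
`X̃ = ⟦1,n⟧^ℕ × 𝔹^n` (strategies are encoded by `ℕ → Fin n`, the value
`S k : Fin n` standing for the integer `(S k) + 1 ∈ ⟦1,n⟧`). -/
def GCI (n : ℕ) (f : BVec n → BVec n) :
    (ℕ → Fin n) × BVec n → (ℕ → Fin n) × BVec n :=
  fun X => (fun k => X.1 (k + 1), Ff n f (X.1 0) X.2)

/-- The distance `d((S,E),(Š,Ě)) = Σ_{k=1}^n δ(E_k,Ě_k)
 + (9/n)·Σ_{k=0}^∞ |S^k − Š^k|/10^{k+1}` on `X̃`. -/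
noncomputable def dCI (n : ℕ) (X Y : (ℕ → Fin n) × BVec n) : ℝ :=
  (∑ k : Fin n, delta (X.2 k) (Y.2 k)) +
    (9 / (n : ℝ)) *
      ∑' k : ℕ, |(((X.1 k : ℕ) : ℝ) + 1) - (((Y.1 k : ℕ) : ℝ) + 1)| / 10 ^ (k + 1)

/-- The periodic points of `G̃_f` are dense in `(X̃, d)`. -/
def densePeriodic (n : ℕ) (f : BVec n → BVec n) : Prop :=
  ∀ X : (ℕ → Fin n) × BVec n, ∀ ε > (0 : ℝ),
    ∃ Y, dCI n X Y < ε ∧ ∃ m : ℕ, 1 ≤ m ∧ (GCI n f)^[m] Y = Y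

/-- `G̃_f` is topologically transitive on `(X̃, d)`. -/
def topTransitive (n : ℕ) (f : BVec n → BVec n) : Prop :=
  ∀ U V : Set ((ℕ → Fin n) × BVec n),
    (∀ x ∈ U, ∃ ε > (0 : ℝ), ∀ y, dCI n x y < ε → y ∈ U) → U.Nonempty →
    (∀ x ∈ V, ∃ ε > (0 : ℝ), ∀ y, dCI n x y < ε → y ∈ V) → V.Nonempty →
    ∃ x ∈ U, ∃ k : ℕ, 0 < k ∧ (GCI n f)^[k] x ∈ V

/-- Devaney's chaos: regularity (dense periodic points) plus topological transitivity. -/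
def devaneyChaotic (n : ℕ) (f : BVec n → BVec n) : Prop :=
  densePeriodic n f ∧ topTransitive n f

def applyList (n : ℕ) (f : BVec n → BVec n) : List (Fin n) → BVec n → BVec n
  | [], E => E
  | i :: L, E => applyList n f L (Ff n f i E)

def iterState (n : ℕ) (f : BVec n → BVec n) (S : ℕ → Fin n) (E : BVec n) : ℕ → BVec n
  | 0 => E
  | m + 1 => Ff n f (S m) (iterState n f S E m)

lemma applyList_append (n : ℕ) (f : BVec n → BVec n) (L1 L2 : List (Fin n)) (E : BVec n) :
    applyList n f (L1 ++ L2) E = applyList n f L2 (applyList n f L1 E) := by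
  induction L1 generalizing E with
  | nil => rfl
  | cons i L ih => simp [applyList, ih]

lemma GCI_iterate (n : ℕ) (f : BVec n → BVec n) (X : (ℕ → Fin n) × BVec n) (m : ℕ) :
    (GCI n f)^[m] X = (fun k => X.1 (k + m), iterState n f X.1 X.2 m) := by
  induction m with
  | zero => simp [iterState]
  | succ m ih =>
      rw [Function.iterate_succ_apply', ih]
      simp only [GCI, iterState, Nat.zero_add]
      refine Prod.ext ?_ rfl
      funext k
      show X.1 (k + 1 + m) = X.1 (k + (m + 1))
      rw [Nat.add_assoc, Nat.add_comm 1 m]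

lemma iterState_eq (n : ℕ) (f : BVec n → BVec n) (S : ℕ → Fin n) (E : BVec n) (m : ℕ) :
    iterState n f S E m = applyList n f ((List.range m).map S) E := by
  induction m with
  | zero => rfl
  | succ m ih =>
      rw [List.range_succ, List.map_append, applyList_append, ← ih]
      rfl

lemma iterState_congr (n : ℕ) (f : BVec n → BVec n) (S S' : ℕ → Fin n) (E : BVec n) (m : ℕ)
    (h : ∀ k < m, S k = S' k) : iterState n f S E m = iterState n f S' E m := by
  induction m with
  | zero => rfl
  | succ m ih =>
      simp only [iterState, ih (fun k hk => h k (Nat.lt_succ_of_lt hk)),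
        h m (Nat.lt_succ_self m)]

lemma exists_list_of_path (n : ℕ) (f : BVec n → BVec n) {x y : BVec n}
    (h : Relation.ReflTransGen (arc n f) x y) : ∃ L, applyList n f L x = y := by
  induction h using Relation.ReflTransGen.head_induction_on with
  | refl => exact ⟨[], rfl⟩
  | head hstep _ ih =>
      obtain ⟨L, hL⟩ := ih
      obtain ⟨i, _, hi⟩ := hstep
      exact ⟨i :: L, by simp [applyList, hi, hL]⟩

lemma step_path (n : ℕ) (f : BVec n → BVec n) (i : Fin n) (E : BVec n) :
    Relation.ReflTransGen (arc n f) E (Ff n f i E) := by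
  by_cases h : f E i = E i
  · have : Ff n f i E = E := by
      funext j; simp only [Ff]; split <;> simp_all
    rw [this]
  · refine Relation.ReflTransGen.single ⟨i, ?_, rfl⟩
    funext j
    rw [Function.update_apply]
    simp only [Ff]
    split
    · cases hfe : f E i <;> cases hE : E i <;> simp_all
    · rfl

lemma path_iterState (n : ℕ) (f : BVec n → BVec n) (S : ℕ → Fin n) (E : BVec n) (m : ℕ) :
    Relation.ReflTransGen (arc n f) E (iterState n f S E m) := by
  induction m with
  | zero => exact Relation.ReflTransGen.refl
  | succ m ih => exact ih.trans (step_path n f (S m) _)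

def cat (n : ℕ) (B : List (Fin n)) (T : ℕ → Fin n) : ℕ → Fin n :=
  fun k => if h : k < B.length then B.get ⟨k, h⟩ else T (k - B.length)

lemma cat_lt (n : ℕ) (B : List (Fin n)) (T : ℕ → Fin n) (k : ℕ) (h : k < B.length) :
    cat n B T k = B.get ⟨k, h⟩ := dif_pos h

lemma cat_shift (n : ℕ) (B : List (Fin n)) (T : ℕ → Fin n) (k : ℕ) :
    cat n B T (k + B.length) = T k := by
  simp only [cat]
  rw [dif_neg (by omega)]
  congr 1
  omega

lemma map_range_eq (n : ℕ) (B : List (Fin n)) (S : ℕ → Fin n)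
    (h : ∀ k (hk : k < B.length), S k = B.get ⟨k, hk⟩) :
    (List.range B.length).map S = B := by
  apply List.ext_get
  · simp
  · intro i h1 h2
    simp only [List.get_eq_getElem, List.getElem_map, List.getElem_range]
    exact h _ _

def per (n : ℕ) (B : List (Fin n)) (hB : 0 < B.length) : ℕ → Fin n :=
  fun k => B.get ⟨k % B.length, Nat.mod_lt _ hB⟩

lemma per_lt (n : ℕ) (B : List (Fin n)) (hB : 0 < B.length) (k : ℕ) (h : k < B.length) :
    per n B hB k = B.get ⟨k, h⟩ := by
  simp only [per]
  congr 1
  exact Fin.ext (Nat.mod_eq_of_lt h)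

lemma per_shift (n : ℕ) (B : List (Fin n)) (hB : 0 < B.length) (k : ℕ) :
    per n B hB (k + B.length) = per n B hB k := by
  simp only [per]
  congr 1
  exact Fin.ext (Nat.add_mod_right k B.length)

lemma summable_bound (n : ℕ) :
    Summable (fun k : ℕ => (n : ℝ) * (1 / 10) ^ (k + 1)) := by
  apply Summable.mul_left
  exact (summable_geometric_of_lt_one (by norm_num) (by norm_num)).comp_injective
    (add_left_injective 1)

lemma term_nonneg (n : ℕ) (X Y : (ℕ → Fin n) × BVec n) (k : ℕ) :
    0 ≤ |(((X.1 k : ℕ) : ℝ) + 1) - (((Y.1 k : ℕ) : ℝ) + 1)| / 10 ^ (k + 1) := by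
  positivity

lemma term_le (n : ℕ) (X Y : (ℕ → Fin n) × BVec n) (k : ℕ) :
    |(((X.1 k : ℕ) : ℝ) + 1) - (((Y.1 k : ℕ) : ℝ) + 1)| / 10 ^ (k + 1)
      ≤ (n : ℝ) * (1 / 10) ^ (k + 1) := by
  have h1 : ((X.1 k : ℕ) : ℝ) < n := by exact_mod_cast (X.1 k).2
  have h2 : ((Y.1 k : ℕ) : ℝ) < n := by exact_mod_cast (Y.1 k).2
  have h3 : (0:ℝ) ≤ ((X.1 k : ℕ) : ℝ) := Nat.cast_nonneg _
  have h4 : (0:ℝ) ≤ ((Y.1 k : ℕ) : ℝ) := Nat.cast_nonneg _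
  have habs : |(((X.1 k : ℕ) : ℝ) + 1) - (((Y.1 k : ℕ) : ℝ) + 1)| ≤ (n : ℝ) := by
    rw [abs_sub_le_iff]; constructor <;> linarith
  have hpow : (0:ℝ) < 10 ^ (k + 1) := by positivity
  rw [div_le_iff₀ hpow]
  calc |(((X.1 k : ℕ) : ℝ) + 1) - (((Y.1 k : ℕ) : ℝ) + 1)| ≤ (n : ℝ) := habs
    _ = (n : ℝ) * (1 / 10) ^ (k + 1) * 10 ^ (k + 1) := by
        rw [mul_assoc, one_div, inv_pow, inv_mul_cancel₀ (by positivity), mul_one]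

lemma summable_terms (n : ℕ) (X Y : (ℕ → Fin n) × BVec n) :
    Summable (fun k : ℕ =>
      |(((X.1 k : ℕ) : ℝ) + 1) - (((Y.1 k : ℕ) : ℝ) + 1)| / 10 ^ (k + 1)) :=
  Summable.of_nonneg_of_le (term_nonneg n X Y) (term_le n X Y) (summable_bound n)

lemma dCI_nonneg_tail (n : ℕ) (X Y : (ℕ → Fin n) × BVec n) :
    0 ≤ (9 / (n : ℝ)) *
      ∑' k : ℕ, |(((X.1 k : ℕ) : ℝ) + 1) - (((Y.1 k : ℕ) : ℝ) + 1)| / 10 ^ (k + 1) := by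
  apply mul_nonneg (by positivity)
  exact tsum_nonneg (term_nonneg n X Y)

lemma state_eq_of_dCI_lt_one (n : ℕ) (X Y : (ℕ → Fin n) × BVec n)
    (h : dCI n X Y < 1) : X.2 = Y.2 := by
  funext j
  by_contra hj
  have h1 : delta (X.2 j) (Y.2 j) = 1 := if_neg hj
  have h2 : ∀ k : Fin n, 0 ≤ delta (X.2 k) (Y.2 k) := by
    intro k; unfold delta; split <;> norm_num
  have h3 : (1:ℝ) ≤ ∑ k : Fin n, delta (X.2 k) (Y.2 k) := by
    rw [← h1]
    exact Finset.single_le_sum (fun k _ => h2 k) (Finset.mem_univ j)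
  have := dCI_nonneg_tail n X Y
  unfold dCI at h
  linarith

lemma tsum_geom_shift (n : ℕ) (N : ℕ) :
    ∑' k : ℕ, (n : ℝ) * (1 / 10) ^ (k + N + 1) = (n : ℝ) * (1 / 10) ^ N / 9 := by
  have : ∀ k : ℕ, (n : ℝ) * (1 / 10) ^ (k + N + 1) =
      ((n : ℝ) * (1 / 10) ^ (N + 1)) * (1 / 10) ^ k := by
    intro k; rw [show k + N + 1 = (N + 1) + k by omega, pow_add]; ring
  rw [tsum_congr this, tsum_mul_left,
    tsum_geometric_of_lt_one (by norm_num) (by norm_num)]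
  rw [pow_succ]
  ring

lemma dCI_le_pow (n : ℕ) (hn : 1 ≤ n) (X Y : (ℕ → Fin n) × BVec n) (N : ℕ)
    (hS : ∀ k < N, X.1 k = Y.1 k) (hE : X.2 = Y.2) :
    dCI n X Y ≤ (1 / 10) ^ N := by
  set g : ℕ → ℝ := fun k =>
    |(((X.1 k : ℕ) : ℝ) + 1) - (((Y.1 k : ℕ) : ℝ) + 1)| / 10 ^ (k + 1) with hg
  have hzero : ∀ k < N, g k = 0 := by
    intro k hk
    simp [hg, hS k hk]
  have hsum : Summable g := summable_terms n X Y
  have hshift : ∑' k, g k = ∑' k, g (k + N) := by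
    rw [← Summable.sum_add_tsum_nat_add N hsum]
    rw [Finset.sum_eq_zero (fun k hk => hzero k (Finset.mem_range.mp hk)), zero_add]
  have hle : ∑' k, g (k + N) ≤ (n : ℝ) * (1 / 10) ^ N / 9 := by
    rw [← tsum_geom_shift n N]
    apply Summable.tsum_le_tsum _ (hsum.comp_injective (add_left_injective N))
    · exact (summable_bound n).comp_injective (add_left_injective N)
    · intro k
      exact term_le n X Y (k + N)
  have hstate : (∑ k : Fin n, delta (X.2 k) (Y.2 k)) = 0 := by
    apply Finset.sum_eq_zero
    intro k _
    simp [delta, hE]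
  have hnpos : (0:ℝ) < n := by exact_mod_cast hn
  unfold dCI
  rw [← hg, hstate, zero_add]
  calc (9 / (n : ℝ)) * ∑' k, g k ≤ (9 / (n : ℝ)) * ((n : ℝ) * (1 / 10) ^ N / 9) := by
        apply mul_le_mul_of_nonneg_left _ (by positivity)
        rw [hshift]; exact hle
    _ = (1 / 10) ^ N := by field_simp

lemma get_prefix (n N : ℕ) (S : ℕ → Fin n) (L : List (Fin n)) (k : ℕ) (hk : k < N)
    (hlen : k < ((List.range N).map S ++ L).length) :
    ((List.range N).map S ++ L).get ⟨k, hlen⟩ = S k := by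
  have h1 : k < ((List.range N).map S).length := by simpa using hk
  rw [List.get_eq_getElem, List.getElem_append_left h1]
  simp

/-- for every `f : 𝔹^n → 𝔹^n`, the chaotic-iterations system
`G̃_f` is chaotic according to Devaney on `(X̃, d)` if and only if the graph
of iterations `Γ(f)` is strongly connected. -/
theorem devaney_iff_strongly_connected (n : ℕ) (hn : 1 ≤ n)
    (f : BVec n → BVec n) :
    devaneyChaotic n f ↔ stronglyConnected n f := by
  constructor
  · rintro ⟨-, htrans⟩ x y
    obtain ⟨z, hz, k, _, hzk⟩ := htrans {w | w.2 = x} {w | w.2 = y}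
      (fun w hw => ⟨1, one_pos, fun u hu => by
        have h := state_eq_of_dCI_lt_one n w u hu
        simp only [Set.mem_setOf_eq] at hw ⊢
        rw [← h]; exact hw⟩)
      ⟨(fun _ => ⟨0, hn⟩, x), rfl⟩
      (fun w hw => ⟨1, one_pos, fun u hu => by
        have h := state_eq_of_dCI_lt_one n w u hu
        simp only [Set.mem_setOf_eq] at hw ⊢
        rw [← h]; exact hw⟩)
      ⟨(fun _ => ⟨0, hn⟩, y), rfl⟩
    rw [GCI_iterate] at hzk
    have hzk' : iterState n f z.1 z.2 k = y := hzk
    have hz' : z.2 = x := hz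
    rw [hz'] at hzk'
    exact hzk' ▸ path_iterState n f z.1 x k
  · intro hsc
    constructor
    · -- dense periodic points
      intro X ε hε
      obtain ⟨N0, hN0⟩ := exists_pow_lt_of_lt_one hε (show (1:ℝ)/10 < 1 by norm_num)
      set N := max N0 1 with hN
      have hpow : ((1:ℝ)/10) ^ N < ε :=
        lt_of_le_of_lt (pow_le_pow_of_le_one (by norm_num) (by norm_num)
          (le_max_left _ _)) hN0
      set B1 : List (Fin n) := (List.range N).map X.1 with hB1
      set EN := applyList n f B1 X.2 with hEN
      obtain ⟨L, hL⟩ := exists_list_of_path n f (hsc EN X.2)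
      set B := B1 ++ L with hB
      have hBlen : 0 < B.length := by
        simp only [hB, List.length_append, hB1, List.length_map, List.length_range]
        omega
      have hNle : N ≤ B.length := by
        simp only [hB, List.length_append, hB1, List.length_map, List.length_range]
        omega
      refine ⟨(per n B hBlen, X.2), ?_, B.length, hBlen, ?_⟩
      · refine lt_of_le_of_lt (dCI_le_pow n hn _ _ N ?_ rfl) hpow
        intro k hk
        show X.1 k = per n B hBlen k
        rw [per_lt n B hBlen k (lt_of_lt_of_le hk hNle)]
        exact (get_prefix n N X.1 L k hk _).symm
      · rw [GCI_iterate]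
        refine Prod.ext ?_ ?_
        · funext k
          exact per_shift n B hBlen k
        · show iterState n f (per n B hBlen) X.2 B.length = X.2
          rw [iterState_eq, map_range_eq n B (per n B hBlen)
            (fun k hk => per_lt n B hBlen k hk), hB, applyList_append, ← hEN, hL]
    · -- topological transitivity
      intro U V hU hUne _ hVne
      obtain ⟨x, hxU⟩ := hUne
      obtain ⟨v, hvV⟩ := hVne
      obtain ⟨ε, hε, hball⟩ := hU x hxU
      obtain ⟨N0, hN0⟩ := exists_pow_lt_of_lt_one hε (show (1:ℝ)/10 < 1 by norm_num)
      set N := max N0 1 with hN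
      have hpow : ((1:ℝ)/10) ^ N < ε :=
        lt_of_le_of_lt (pow_le_pow_of_le_one (by norm_num) (by norm_num)
          (le_max_left _ _)) hN0
      set B1 : List (Fin n) := (List.range N).map x.1 with hB1
      set EN := applyList n f B1 x.2 with hEN
      obtain ⟨L, hL⟩ := exists_list_of_path n f (hsc EN v.2)
      set B := B1 ++ L with hB
      have hBlen : 0 < B.length := by
        simp only [hB, List.length_append, hB1, List.length_map, List.length_range]
        omega
      have hNle : N ≤ B.length := by
        simp only [hB, List.length_append, hB1, List.length_map, List.length_range]
        omega
      set z : (ℕ → Fin n) × BVec n := (cat n B v.1, x.2) with hz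
      refine ⟨z, ?_, B.length, hBlen, ?_⟩
      · apply hball
        refine lt_of_le_of_lt (dCI_le_pow n hn _ _ N ?_ rfl) hpow
        intro k hk
        rw [hz]
        show x.1 k = cat n B v.1 k
        rw [cat_lt n B v.1 k (lt_of_lt_of_le hk hNle)]
        exact (get_prefix n N x.1 L k hk _).symm
      · rw [GCI_iterate]
        have h1 : (fun k => z.1 (k + B.length)) = v.1 := by
          funext k
          exact cat_shift n B v.1 k
        have h2 : iterState n f z.1 z.2 B.length = v.2 := by
          show iterState n f (cat n B v.1) x.2 B.length = v.2
          rw [iterState_eq, map_range_eq n B (cat n B v.1)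
            (fun k hk => cat_lt n B v.1 k hk), hB, applyList_append, ← hEN, hL]
        rw [h1, h2]
        exact hvV


end CI
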